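/- For a parameter α, define the polynomials x_0 = 12α⁴ + 5α² − 1, x_1 = 8α⁵ + 8α⁴ + 22α³ − 2α² + 2α + 2, x_2 = −8α⁵ − 4α⁴ + 2α³ − 11α² − 2α − 1, x_3 = 8α⁵ − 10α³ − 6α, x_4 = 8α⁵ − 4α⁴ − 2α³ − 11α² + 2α − 1, x_5 = −8α⁵ + 8α⁴ − 22α³ − 2α² − 2α + 2. Then for every α in any commutative ring the identities x_{i+2}² − 2x_{i+1}² + x_i² = 2x_0² hold for i = 1, 2, 3; moreover, for infinitely many α ∈ ℚ the resulting point is a non-trivial rational point of the Büchi K3 surface X_5, i.e., there is no t ∈ ℚ with x_i² = (t+i)²·x_0² for all i ∈ {1,…,5}. -/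
import Mathlib


/-- `x₀ = 12α⁴ + 5α² − 1`. -/
def buchiX0 {R : Type*} [CommRing R] (α : R) : R := 12 * α ^ 4 + 5 * α ^ 2 - 1

/-- `x₁ = 8α⁵ + 8α⁴ + 22α³ − 2α² + 2α + 2`. -/
def buchiX1 {R : Type*} [CommRing R] (α : R) : R :=
  8 * α ^ 5 + 8 * α ^ 4 + 22 * α ^ 3 - 2 * α ^ 2 + 2 * α + 2

/-- `x₂ = −8α⁵ − 4α⁴ + 2α³ − 11α² − 2α − 1`. -/
def buchiX2 {R : Type*} [CommRing R] (α : R) : R :=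
  -8 * α ^ 5 - 4 * α ^ 4 + 2 * α ^ 3 - 11 * α ^ 2 - 2 * α - 1

/-- `x₃ = 8α⁵ − 10α³ − 6α`. -/
def buchiX3 {R : Type*} [CommRing R] (α : R) : R :=
  8 * α ^ 5 - 10 * α ^ 3 - 6 * α

/-- `x₄ = 8α⁵ − 4α⁴ − 2α³ − 11α² + 2α − 1`. -/
def buchiX4 {R : Type*} [CommRing R] (α : R) : R :=
  8 * α ^ 5 - 4 * α ^ 4 - 2 * α ^ 3 - 11 * α ^ 2 + 2 * α - 1

/-- `x₅ = −8α⁵ + 8α⁴ − 22α³ − 2α² − 2α + 2`. -/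
def buchiX5 {R : Type*} [CommRing R] (α : R) : R :=
  -8 * α ^ 5 + 8 * α ^ 4 - 22 * α ^ 3 - 2 * α ^ 2 - 2 * α + 2

open Polynomial in
/-- The auxiliary polynomial whose non-vanishing at `α` certifies non-triviality. -/
noncomputable def buchiP : Polynomial ℚ :=
  ((buchiX2 (X : ℚ[X])) ^ 2 - (buchiX1 (X : ℚ[X]) + buchiX0 (X : ℚ[X])) ^ 2) *
    ((buchiX2 (X : ℚ[X])) ^ 2 - (buchiX1 (X : ℚ[X]) - buchiX0 (X : ℚ[X])) ^ 2)

lemma buchiP_eval (α : ℚ) :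
    buchiP.eval α =
      ((buchiX2 α) ^ 2 - (buchiX1 α + buchiX0 α) ^ 2) *
        ((buchiX2 α) ^ 2 - (buchiX1 α - buchiX0 α) ^ 2) := by
  simp [buchiP, buchiX0, buchiX1, buchiX2]

/-- The explicit one-parameter family of points of the Büchi K3 surface:
for every `α` in any commutative ring the three Büchi quadric identities
hold, and for infinitely many `α ∈ ℚ` the resulting rational point is
non-trivial, i.e. there is no `t ∈ ℚ` with `x_i² = (t+i)²·x₀²` for
all `i ∈ {1,…,5}`. -/
theorem buchi_one_parameter_family :
    (∀ (R : Type) [CommRing R] (α : R),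
      (buchiX3 α) ^ 2 - 2 * (buchiX2 α) ^ 2 + (buchiX1 α) ^ 2
          = 2 * (buchiX0 α) ^ 2 ∧
      (buchiX4 α) ^ 2 - 2 * (buchiX3 α) ^ 2 + (buchiX2 α) ^ 2
          = 2 * (buchiX0 α) ^ 2 ∧
      (buchiX5 α) ^ 2 - 2 * (buchiX4 α) ^ 2 + (buchiX3 α) ^ 2
          = 2 * (buchiX0 α) ^ 2) ∧
    {α : ℚ | ¬ ∃ t : ℚ,
      (buchiX1 α) ^ 2 = (t + 1) ^ 2 * (buchiX0 α) ^ 2 ∧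
      (buchiX2 α) ^ 2 = (t + 2) ^ 2 * (buchiX0 α) ^ 2 ∧
      (buchiX3 α) ^ 2 = (t + 3) ^ 2 * (buchiX0 α) ^ 2 ∧
      (buchiX4 α) ^ 2 = (t + 4) ^ 2 * (buchiX0 α) ^ 2 ∧
      (buchiX5 α) ^ 2 = (t + 5) ^ 2 * (buchiX0 α) ^ 2}.Infinite := by
  constructor
  · intro R _ α
    refine ⟨?_, ?_, ?_⟩ <;>
      simp only [buchiX0, buchiX1, buchiX2, buchiX3, buchiX4, buchiX5] <;> ring
  · have hP : buchiP ≠ 0 := by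
      intro h
      have h2 : buchiP.eval 2 = 0 := by rw [h]; simp
      rw [buchiP_eval] at h2
      norm_num [buchiX0, buchiX1, buchiX2] at h2
    have hsub : {α : ℚ | ¬ buchiP.IsRoot α} ⊆
        {α : ℚ | ¬ ∃ t : ℚ,
          (buchiX1 α) ^ 2 = (t + 1) ^ 2 * (buchiX0 α) ^ 2 ∧
          (buchiX2 α) ^ 2 = (t + 2) ^ 2 * (buchiX0 α) ^ 2 ∧
          (buchiX3 α) ^ 2 = (t + 3) ^ 2 * (buchiX0 α) ^ 2 ∧
          (buchiX4 α) ^ 2 = (t + 4) ^ 2 * (buchiX0 α) ^ 2 ∧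
          (buchiX5 α) ^ 2 = (t + 5) ^ 2 * (buchiX0 α) ^ 2} := by
      intro α hα ht
      obtain ⟨t, h1, h2, -⟩ := ht
      apply hα
      show buchiP.eval α = 0
      rw [buchiP_eval]
      linear_combination
        ((buchiX1 α) ^ 2 + (t + 1) ^ 2 * (buchiX0 α) ^ 2
            - 2 * (t + 2) ^ 2 * (buchiX0 α) ^ 2 - 2 * (buchiX0 α) ^ 2) * h1 +
        ((buchiX2 α) ^ 2 + (t + 2) ^ 2 * (buchiX0 α) ^ 2
            - 2 * (buchiX1 α) ^ 2 - 2 * (buchiX0 α) ^ 2) * h2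
    refine Set.Infinite.mono hsub ?_
    have hfin : {α : ℚ | buchiP.IsRoot α}.Finite := Polynomial.finite_setOf_isRoot hP
    simpa [Set.compl_setOf] using hfin.infinite_compl
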